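/- (Lemma 2) Let f : ℝ^m → ℝ^m be continuous with f(0) = 0, and suppose solutions of ẋ = f(x) exist and are unique in forward time. Suppose f = f_H + f_NH where: f_H is continuous and (r, l_r)-homogeneous with homogeneity degree l_r < 0; the origin of ẋ = f_H(x) is asymptotically stable; f_NH is continuous with f_NH(0) = 0; and for every j ∈ {1,…,m}, lim_{ε→0⁺} ε^{−(l_r + r_j)} f_{NH,j}(Δ_ε^r x) = 0 uniformly with respect to x in the unit sphere of ℝ^m. If, in addition, the origin of ẋ = f(x) is globally asymptotically stable, then the origin of ẋ = f(x) is globally finite-time stable. -/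

import Mathlib

open Filter Topology

noncomputable def hN {m : ℕ} (r : Fin m → ℝ) (x : Fin m → ℝ) : ℝ :=
  ∑ j, |x j| ^ (r j)⁻¹

lemma hN_nonneg {m : ℕ} (r : Fin m → ℝ) (x : Fin m → ℝ) : 0 ≤ hN r x :=
  Finset.sum_nonneg fun j _ => Real.rpow_nonneg (abs_nonneg _) _

lemma hN_single_le {m : ℕ} (r : Fin m → ℝ) (x : Fin m → ℝ) (j : Fin m) :
    |x j| ^ (r j)⁻¹ ≤ hN r x :=
  Finset.single_le_sum (f := fun i => |x i| ^ (r i)⁻¹)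
    (fun i _ => Real.rpow_nonneg (abs_nonneg _) _) (Finset.mem_univ j)

lemma hN_zero {m : ℕ} (r : Fin m → ℝ) (hr : ∀ j, 0 < r j) : hN r 0 = 0 := by
  unfold hN
  refine Finset.sum_eq_zero fun j _ => ?_
  simp [Real.zero_rpow (inv_ne_zero (hr j).ne')]

lemma hN_continuous {m : ℕ} (r : Fin m → ℝ) (hr : ∀ j, 0 < r j) : Continuous (hN r) := by
  unfold hN
  refine continuous_finset_sum _ fun j _ => ?_
  exact ((continuous_apply j).abs).rpow_const (fun x => Or.inr (inv_nonneg.2 (hr j).le))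

lemma hN_dil {m : ℕ} (r : Fin m → ℝ) (hr : ∀ j, 0 < r j) (ε : ℝ) (hε : 0 < ε)
    (x : Fin m → ℝ) : hN r (fun j => ε ^ r j * x j) = ε * hN r x := by
  unfold hN
  rw [Finset.mul_sum]
  refine Finset.sum_congr rfl fun j _ => ?_
  rw [abs_mul, abs_of_nonneg (Real.rpow_nonneg hε.le _),
    Real.mul_rpow (Real.rpow_nonneg hε.le _) (abs_nonneg _),
    ← Real.rpow_mul hε.le, mul_inv_cancel₀ (hr j).ne', Real.rpow_one]

lemma hN_pos {m : ℕ} (r : Fin m → ℝ) (hr : ∀ j, 0 < r j) (x : Fin m → ℝ) (hx : x ≠ 0) :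
    0 < hN r x := by
  obtain ⟨j, hj⟩ : ∃ j, x j ≠ 0 := by
    by_contra h; push_neg at h; exact hx (funext h)
  exact lt_of_lt_of_le (Real.rpow_pos_of_pos (abs_pos.2 hj) _) (hN_single_le r x j)

/-- control of sup norm by homogeneous norm -/
lemma hN_norm_control {m : ℕ} [Nonempty (Fin m)] (r : Fin m → ℝ) (hr : ∀ j, 0 < r j) :
    ∀ δ : ℝ, 0 < δ → ∃ η : ℝ, 0 < η ∧ ∀ x : Fin m → ℝ, hN r x ≤ η → ‖x‖ < δ := by
  intro δ hδ
  set c : ℝ := min δ 1 / 2 with hc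
  have hc0 : 0 < c := by simp only [hc]; positivity
  have hcδ : c < δ := by
    have := min_le_left δ 1; simp only [hc]; linarith
  refine ⟨Finset.univ.inf' Finset.univ_nonempty (fun j => c ^ (r j)⁻¹), ?_, ?_⟩
  · obtain ⟨j, -, hj⟩ := Finset.exists_mem_eq_inf' Finset.univ_nonempty
      (fun j => c ^ (r j)⁻¹)
    rw [hj]; exact Real.rpow_pos_of_pos hc0 _
  · intro x hx
    have hxn : ∀ j, |x j| ≤ c := by
      intro j
      have h3 : |x j| ^ (r j)⁻¹ ≤ c ^ (r j)⁻¹ :=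
        (hN_single_le r x j).trans (hx.trans (Finset.inf'_le _ (Finset.mem_univ j)))
      have h4 : (|x j| ^ (r j)⁻¹) ^ (r j) ≤ (c ^ (r j)⁻¹) ^ (r j) :=
        Real.rpow_le_rpow (Real.rpow_nonneg (abs_nonneg _) _) h3 (hr j).le
      rwa [Real.rpow_inv_rpow (abs_nonneg _) (hr j).ne',
        Real.rpow_inv_rpow hc0.le (hr j).ne'] at h4
    calc ‖x‖ ≤ c := (pi_norm_le_iff_of_nonneg hc0.le).2 fun j => by
            simpa [Real.norm_eq_abs] using hxn j
    _ < δ := hcδ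

/-- control of homogeneous norm by sup norm -/
lemma norm_hN_control {m : ℕ} [Nonempty (Fin m)] (r : Fin m → ℝ) (hr : ∀ j, 0 < r j) :
    ∀ δ : ℝ, 0 < δ → ∃ η : ℝ, 0 < η ∧ ∀ x : Fin m → ℝ, ‖x‖ ≤ η → hN r x < δ := by
  intro δ hδ
  set c : ℝ := δ / (m + 1) with hc
  have hc0 : 0 < c := by simp only [hc]; positivity
  refine ⟨Finset.univ.inf' Finset.univ_nonempty (fun j => c ^ (r j)), ?_, ?_⟩
  · obtain ⟨j, -, hj⟩ := Finset.exists_mem_eq_inf' Finset.univ_nonempty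
      (fun j => c ^ (r j))
    rw [hj]; exact Real.rpow_pos_of_pos hc0 _
  · intro x hx
    have hbound : ∀ j, |x j| ^ (r j)⁻¹ ≤ c := by
      intro j
      have h1 : |x j| ≤ c ^ (r j) := by
        have h0 := norm_le_pi_norm x j
        rw [Real.norm_eq_abs] at h0
        exact h0.trans (hx.trans (Finset.inf'_le _ (Finset.mem_univ j)))
      have h2 : |x j| ^ (r j)⁻¹ ≤ (c ^ (r j)) ^ (r j)⁻¹ :=
        Real.rpow_le_rpow (abs_nonneg _) h1 (inv_nonneg.2 (hr j).le)
      rwa [Real.rpow_rpow_inv hc0.le (hr j).ne'] at h2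
    calc hN r x ≤ ∑ _j : Fin m, c := Finset.sum_le_sum fun j _ => hbound j
    _ = m * c := by simp [mul_comm]
    _ < δ := by
        rw [hc]
        have hm : (0:ℝ) < m + 1 := by positivity
        have h2 : (m:ℝ) / (m+1) < 1 := by rw [div_lt_one hm]; linarith
        calc (m:ℝ) * (δ / (m+1)) = δ * ((m:ℝ)/(m+1)) := by ring
        _ < δ * 1 := by exact mul_lt_mul_of_pos_left h2 hδ
        _ = δ := mul_one δ
  
lemma norm_le_one_of_hN_le_one {m : ℕ} (r : Fin m → ℝ) (hr : ∀ j, 0 < r j)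
    (x : Fin m → ℝ) (hx : hN r x ≤ 1) : ‖x‖ ≤ 1 := by
  refine (pi_norm_le_iff_of_nonneg zero_le_one).2 fun j => ?_
  rw [Real.norm_eq_abs]
  by_contra h
  push_neg at h
  have : (1:ℝ) < |x j| ^ (r j)⁻¹ :=
    (Real.one_lt_rpow_iff_of_pos (by linarith)).2 (Or.inl ⟨h, by
      exact inv_pos.2 (hr j)⟩)
  linarith [hN_single_le r x j]

lemma one_le_hN_of_norm_eq_one {m : ℕ} [Nonempty (Fin m)] (r : Fin m → ℝ)
    (hr : ∀ j, 0 < r j) (x : Fin m → ℝ) (hx : ‖x‖ = 1) : 1 ≤ hN r x := by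
  obtain ⟨j, hj⟩ : ∃ j, 1 ≤ |x j| := by
    by_contra h
    push_neg at h
    set M := Finset.univ.sup' Finset.univ_nonempty (fun j => |x j|) with hM
    obtain ⟨j₀, -, hj₀⟩ := Finset.exists_mem_eq_sup' Finset.univ_nonempty
      (fun j : Fin m => |x j|)
    have hM1 : M < 1 := by rw [hM, hj₀]; exact h j₀
    have hMnn : 0 ≤ M := by rw [hM, hj₀]; exact abs_nonneg _
    have : ‖x‖ ≤ M := (pi_norm_le_iff_of_nonneg hMnn).2 fun j => by
      rw [Real.norm_eq_abs, hM]
      exact Finset.le_sup' (fun j : Fin m => |x j|) (Finset.mem_univ j)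
    rw [hx] at this; linarith
  have h1 : 0 < |x j| := lt_of_lt_of_le one_pos hj
  have : (1:ℝ) ≤ |x j| ^ (r j)⁻¹ :=
    Real.one_le_rpow hj (inv_nonneg.2 (hr j).le)
  exact this.trans (hN_single_le r x j)

/-- Every nonzero point is a dilation of a point on the unit sphere, with dilation
parameter at most the homogeneous norm. -/
lemma exists_dilation_rep {m : ℕ} (r : Fin m → ℝ) (hr : ∀ j, 0 < r j)
    (p : Fin m → ℝ) (hp : p ≠ 0) :
    ∃ ε : ℝ, 0 < ε ∧ ∃ u : Fin m → ℝ, ‖u‖ = 1 ∧ (∀ j, p j = ε ^ r j * u j) ∧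
      ε ≤ hN r p := by
  obtain ⟨j₀, hj₀⟩ : ∃ j, p j ≠ 0 := by
    by_contra h; push_neg at h; exact hp (funext h)
  have : Nonempty (Fin m) := ⟨j₀⟩
  have hpj₀ : 0 < |p j₀| := abs_pos.2 hj₀
  set φ : ℝ → ℝ := fun ε => ‖(fun j => ε ^ (-(r j)) * p j : Fin m → ℝ)‖ with hφ
  set a : ℝ := min 1 (|p j₀| ^ (r j₀)⁻¹) with ha
  set b : ℝ := max 1 (Finset.univ.sup' Finset.univ_nonempty
    (fun j => |p j| ^ (r j)⁻¹)) with hb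
  have ha0 : 0 < a := lt_min one_pos (Real.rpow_pos_of_pos hpj₀ _)
  have hab : a ≤ b := le_trans (min_le_left _ _) (le_max_left _ _)
  have hφcont : ContinuousOn φ (Set.Icc a b) := by
    refine ContinuousOn.norm (continuousOn_pi.2 fun j => ?_)
    exact (continuousOn_id.rpow_const fun x hx =>
      Or.inl (ne_of_gt (lt_of_lt_of_le ha0 hx.1))).mul continuousOn_const
  have hφa : 1 ≤ φ a := by
    have h1 : a ^ (r j₀) ≤ |p j₀| := by
      have h2 : a ≤ |p j₀| ^ (r j₀)⁻¹ := min_le_right _ _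
      have h3 : a ^ (r j₀) ≤ (|p j₀| ^ (r j₀)⁻¹) ^ (r j₀) :=
        Real.rpow_le_rpow ha0.le h2 (hr j₀).le
      rwa [Real.rpow_inv_rpow (abs_nonneg _) (hr j₀).ne'] at h3
    have h4 : |a ^ (-(r j₀)) * p j₀| = (a ^ (r j₀))⁻¹ * |p j₀| := by
      rw [abs_mul, Real.rpow_neg ha0.le, abs_of_pos
        (inv_pos.2 (Real.rpow_pos_of_pos ha0 _))]
    have h5 : (1:ℝ) ≤ (a ^ (r j₀))⁻¹ * |p j₀| := by
      rw [← inv_mul_cancel₀ (ne_of_gt (Real.rpow_pos_of_pos ha0 (r j₀)))]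
      exact mul_le_mul_of_nonneg_left h1 (inv_pos.2 (Real.rpow_pos_of_pos ha0 _)).le
    calc (1:ℝ) ≤ |a ^ (-(r j₀)) * p j₀| := by rw [h4]; exact h5
    _ ≤ φ a := by
        have := norm_le_pi_norm (fun j => a ^ (-(r j)) * p j : Fin m → ℝ) j₀
        rwa [Real.norm_eq_abs] at this
  have hφb : φ b ≤ 1 := by
    refine (pi_norm_le_iff_of_nonneg zero_le_one).2 fun j => ?_
    have hb1 : (1:ℝ) ≤ b := le_max_left _ _
    have hb0 : 0 < b := lt_of_lt_of_le one_pos hb1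
    have h1 : |p j| ≤ b ^ (r j) := by
      have h2 : |p j| ^ (r j)⁻¹ ≤ b :=
        le_trans (Finset.le_sup' (fun j : Fin m => |p j| ^ (r j)⁻¹)
          (Finset.mem_univ j)) (le_max_right _ _)
      have h3 : (|p j| ^ (r j)⁻¹) ^ (r j) ≤ b ^ (r j) :=
        Real.rpow_le_rpow (Real.rpow_nonneg (abs_nonneg _) _) h2 (hr j).le
      rwa [Real.rpow_inv_rpow (abs_nonneg _) (hr j).ne'] at h3
    rw [Real.norm_eq_abs, abs_mul, Real.rpow_neg hb0.le,
      abs_of_pos (inv_pos.2 (Real.rpow_pos_of_pos hb0 _))]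
    rw [← inv_mul_cancel₀ (ne_of_gt (Real.rpow_pos_of_pos hb0 (r j)))]
    exact mul_le_mul_of_nonneg_left h1 (inv_pos.2 (Real.rpow_pos_of_pos hb0 _)).le
  have h1mem : (1:ℝ) ∈ Set.Icc (φ b) (φ a) := ⟨hφb, hφa⟩
  obtain ⟨ε, hεmem, hεeq⟩ := intermediate_value_Icc' hab hφcont h1mem
  have hε0 : 0 < ε := lt_of_lt_of_le ha0 hεmem.1
  refine ⟨ε, hε0, fun j => ε ^ (-(r j)) * p j, hεeq, fun j => ?_, ?_⟩
  · rw [← mul_assoc, ← Real.rpow_add hε0, add_neg_cancel, Real.rpow_zero, one_mul]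
  · have hrepr : p = fun j => ε ^ r j * (ε ^ (-(r j)) * p j) := funext fun j => by
      rw [← mul_assoc, ← Real.rpow_add hε0, add_neg_cancel, Real.rpow_zero, one_mul]
    calc ε = ε * 1 := (mul_one ε).symm
    _ ≤ ε * hN r (fun j => ε ^ (-(r j)) * p j) := by
        exact mul_le_mul_of_nonneg_left
          (one_le_hN_of_norm_eq_one r hr _ hεeq) hε0.le
    _ = hN r p := by
        conv_rhs => rw [hrepr]
        rw [hN_dil r hr ε hε0]

/-- smallness of the rescaled non-homogeneous remainder near the origin -/
lemma remainder_small {m : ℕ} [Nonempty (Fin m)] (r : Fin m → ℝ) (hr : ∀ j, 0 < r j)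
    (lr : ℝ) (fNH : (Fin m → ℝ) → (Fin m → ℝ))
    (hfNH_cont : Continuous fNH) (hfNH0 : fNH 0 = 0)
    (hvanish : ∀ j : Fin m, ∀ η : ℝ, 0 < η → ∃ ε₀ : ℝ, 0 < ε₀ ∧
      ∀ ε : ℝ, 0 < ε → ε < ε₀ → ∀ x : Fin m → ℝ, ‖x‖ = 1 →
        |ε ^ (-(lr + r j)) * fNH (fun i => ε ^ r i * x i) j| < η) :
    ∀ η' : ℝ, 0 < η' → ∃ ρ' : ℝ, 0 < ρ' ∧ ∀ ρ : ℝ, 0 < ρ → ρ ≤ ρ' →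
      ∀ p : Fin m → ℝ, p ≠ 0 → hN r p ≤ ρ → ∀ j, |ρ ^ (-(lr + r j)) * fNH p j| ≤ η' := by
  intro η' hη'
  have H : ∀ j : Fin m, ∃ c : ℝ, 0 < c ∧ ∀ ρ : ℝ, 0 < ρ → ρ ≤ c →
      ∀ p : Fin m → ℝ, p ≠ 0 → hN r p ≤ ρ → |ρ ^ (-(lr + r j)) * fNH p j| ≤ η' := by
    intro j
    rcases le_or_gt (lr + r j) 0 with hc | hc
    · -- continuity case
      have hcont : ContinuousAt fNH 0 := hfNH_cont.continuousAt
      rw [Metric.continuousAt_iff] at hcont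
      obtain ⟨δf, hδf, hδfp⟩ := hcont η' hη'
      obtain ⟨ηc, hηc, hηcp⟩ := hN_norm_control r hr (δf/2) (by linarith)
      refine ⟨min 1 ηc, lt_min one_pos hηc, fun ρ hρ0 hρ p hp hNp => ?_⟩
      have h1 : ρ ^ (-(lr + r j)) ≤ 1 :=
        Real.rpow_le_one hρ0.le (hρ.trans (min_le_left _ _)) (by linarith)
      have h2 : ‖p‖ < δf / 2 := hηcp p (hNp.trans (hρ.trans (min_le_right _ _)))
      have h3 : dist p 0 < δf := by
        rw [dist_zero_right]; linarith
      have h4 : ‖fNH p‖ < η' := by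
        have := hδfp h3
        rwa [hfNH0, dist_zero_right] at this
      have h5 : |fNH p j| ≤ ‖fNH p‖ := by
        have := norm_le_pi_norm (fNH p) j
        rwa [Real.norm_eq_abs] at this
      calc |ρ ^ (-(lr + r j)) * fNH p j| = ρ ^ (-(lr + r j)) * |fNH p j| := by
            rw [abs_mul, abs_of_nonneg (Real.rpow_nonneg hρ0.le _)]
      _ ≤ 1 * η' := mul_le_mul h1 (h5.trans h4.le) (abs_nonneg _) zero_le_one
      _ = η' := one_mul η'
    · -- hvanish case
      obtain ⟨ε₀, hε₀, hε₀p⟩ := hvanish j η' hη'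
      refine ⟨ε₀/2, by linarith, fun ρ hρ0 hρ p hp hNp => ?_⟩
      obtain ⟨ε, hε0, u, hu, hrep, hεle⟩ := exists_dilation_rep r hr p hp
      have hεnum : ε ≤ ρ := hεle.trans hNp
      have hεlt : ε < ε₀ := by linarith
      have hpe : p = fun i => ε ^ r i * u i := funext hrep
      have hkey : |ε ^ (-(lr + r j)) * fNH p j| < η' := by
        rw [hpe]; exact hε₀p ε hε0 hεlt u hu
      set a := lr + r j with hadef
      have hεa : (0:ℝ) < ε ^ a := Real.rpow_pos_of_pos hε0 a
      have hρa : (0:ℝ) < ρ ^ a := Real.rpow_pos_of_pos hρ0 a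
      have hsplit : ρ ^ (-a) * fNH p j = (ε/ρ) ^ a * (ε ^ (-a) * fNH p j) := by
        rw [Real.div_rpow hε0.le hρ0.le, Real.rpow_neg hρ0.le, Real.rpow_neg hε0.le]
        field_simp
      have hratio : (ε/ρ) ^ a ≤ 1 :=
        Real.rpow_le_one (by positivity) (div_le_one_of_le₀ hεnum hρ0.le) hc.le
      calc |ρ ^ (-a) * fNH p j| = (ε/ρ) ^ a * |ε ^ (-a) * fNH p j| := by
            rw [hsplit, abs_mul, abs_of_nonneg (Real.rpow_nonneg (by positivity) _)]
      _ ≤ 1 * η' := mul_le_mul hratio hkey.le (abs_nonneg _) zero_le_one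
      _ = η' := one_mul η'
  choose g hg using H
  refine ⟨Finset.univ.inf' Finset.univ_nonempty g, ?_, ?_⟩
  · obtain ⟨j, -, hj⟩ := Finset.exists_mem_eq_inf' Finset.univ_nonempty g
    rw [hj]; exact (hg j).1
  · intro ρ hρ0 hρ p hp hNp j
    exact (hg j).2 ρ hρ0 (hρ.trans (Finset.inf'_le g (Finset.mem_univ j))) p hp hNp

/-- An ultrafilter limit of uniformly bounded approximate solutions of `ẏ = fH(y)`
is an exact solution. -/
lemma limitSolution {m : ℕ} (fH : (Fin m → ℝ) → (Fin m → ℝ)) (hfH_cont : Continuous fH)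
    (U : Ultrafilter ℕ) (v D : ℕ → ℝ → (Fin m → ℝ))
    (h_ode : ∀ᶠ k in (U : Filter ℕ), ∀ s : ℝ, 0 ≤ s → HasDerivAt (v k) (D k s) s)
    (h_Dcont : ∀ᶠ k in (U : Filter ℕ), ContinuousOn (D k) (Set.Ici 0))
    (h_bdd : ∀ᶠ k in (U : Filter ℕ), ∀ s : ℝ, 0 ≤ s → ‖v k s‖ ≤ 1)
    (h_small : ∀ ε : ℝ, 0 < ε → ∀ᶠ k in (U : Filter ℕ),
      ∀ s : ℝ, 0 ≤ s → ‖D k s - fH (v k s)‖ ≤ ε) :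
    ∃ Y : ℝ → (Fin m → ℝ), (∀ t : ℝ, 0 ≤ t → HasDerivAt Y (fH (Y t)) t) ∧
      (∀ s : ℝ, 0 ≤ s → Tendsto (fun k => v k s) (U : Filter ℕ) (𝓝 (Y s))) ∧
      (∀ s : ℝ, 0 ≤ s → ‖Y s‖ ≤ 1) ∧
      ∃ C : ℝ, 0 < C ∧ (∀ᶠ k in (U : Filter ℕ), ∀ s t : ℝ, 0 ≤ s → 0 ≤ t →
          ‖v k s - v k t‖ ≤ C * |s - t|) ∧
        (∀ s t : ℝ, ‖Y s - Y t‖ ≤ C * |s - t|) := by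
  classical
  -- bound for fH on the closed unit ball
  obtain ⟨M₁, hM₁⟩ := (isCompact_closedBall (0 : Fin m → ℝ) 1).exists_bound_of_continuousOn
    hfH_cont.continuousOn
  set M2 : ℝ := max M₁ 0 + 1 with hM2def
  have hM2pos : 0 < M2 := by positivity
  have hfHb : ∀ q : Fin m → ℝ, ‖q‖ ≤ 1 → ‖fH q‖ ≤ max M₁ 0 := fun q hq =>
    (hM₁ q (by simpa [Metric.mem_closedBall, dist_zero_right] using hq)).trans
      (le_max_left _ _)
  -- equi-Lipschitz property
  have hlip : ∀ᶠ k in (U : Filter ℕ), ∀ s t : ℝ, 0 ≤ s → 0 ≤ t →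
      ‖v k s - v k t‖ ≤ M2 * |s - t| := by
    filter_upwards [h_ode, h_bdd, h_small 1 one_pos] with k hk1 hk2 hk3
    intro s t hs ht
    have key := (convex_Ici (0:ℝ)).norm_image_sub_le_of_norm_hasDerivWithin_le
      (f := v k) (f' := D k) (C := M2)
      (fun x hx => (hk1 x hx).hasDerivWithinAt)
      (fun x hx => by
        calc ‖D k x‖ ≤ ‖fH (v k x)‖ + ‖D k x - fH (v k x)‖ := by
              have := norm_add_le (fH (v k x)) (D k x - fH (v k x))
              simpa using this
        _ ≤ max M₁ 0 + 1 := add_le_add (hfHb _ (hk2 x hx)) (hk3 x hx))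
      ht hs
    simpa [Real.norm_eq_abs] using key
  -- pointwise ultrafilter limits
  have H : ∀ s : ℝ, ∃ y : Fin m → ℝ, 0 ≤ s →
      (‖y‖ ≤ 1 ∧ Tendsto (fun k => v k s) (U : Filter ℕ) (𝓝 y)) := by
    intro s
    rcases le_or_gt 0 s with hs | hs
    · obtain ⟨a, ha, hconv⟩ : ∃ a ∈ Metric.closedBall (0 : Fin m → ℝ) 1,
          Tendsto (fun k => v k s) (U : Filter ℕ) (𝓝 a) := by
        obtain ⟨a, ha, hle⟩ := (isCompact_closedBall (0 : Fin m → ℝ) 1).ultrafilter_le_nhds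
          (U.map (fun k => v k s)) (by
            rw [Ultrafilter.coe_map, Filter.le_principal_iff, Filter.mem_map]
            filter_upwards [h_bdd] with k hk
            simpa [Metric.mem_closedBall, dist_zero_right] using hk s hs)
        exact ⟨a, ha, by rwa [Ultrafilter.coe_map] at hle⟩
      exact ⟨a, fun _ => ⟨by simpa [Metric.mem_closedBall, dist_zero_right] using ha, hconv⟩⟩
    · exact ⟨0, fun h => absurd h (not_le.2 hs)⟩
  choose w hw using H
  set g : ℝ → (Fin m → ℝ) := fun s => w (max s 0) with hgdef
  have hg_eq : ∀ s : ℝ, 0 ≤ s → g s = w s := fun s hs => by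
    simp only [hgdef, max_eq_left hs]
  have hg_conv : ∀ s : ℝ, 0 ≤ s → Tendsto (fun k => v k s) (U : Filter ℕ) (𝓝 (g s)) :=
    fun s hs => by rw [hg_eq s hs]; exact (hw s hs).2
  have hg_bdd : ∀ s : ℝ, ‖g s‖ ≤ 1 := fun s => (hw (max s 0) (le_max_right s 0)).1
  -- Lipschitz property of the limit
  have hg_lip : ∀ s t : ℝ, ‖g s - g t‖ ≤ M2 * |s - t| := by
    have hw_lip : ∀ s t : ℝ, 0 ≤ s → 0 ≤ t → ‖w s - w t‖ ≤ M2 * |s - t| := by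
      intro s t hs ht
      have h1 : Tendsto (fun k => v k s - v k t) (U : Filter ℕ) (𝓝 (w s - w t)) :=
        ((hw s hs).2).sub ((hw t ht).2)
      refine le_of_tendsto (h1.norm) ?_
      filter_upwards [hlip] with k hk using hk s t hs ht
    intro s t
    have h2 := hw_lip (max s 0) (max t 0) (le_max_right s 0) (le_max_right t 0)
    refine h2.trans (mul_le_mul_of_nonneg_left ?_ hM2pos.le)
    exact abs_max_sub_max_le_abs s t 0
  have hg_cont : Continuous g := by
    rw [Metric.continuous_iff]
    intro s ε hε
    refine ⟨ε / (M2 + 1), by positivity, fun t ht => ?_⟩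
    have := hg_lip t s
    rw [dist_eq_norm] at *
    calc ‖g t - g s‖ ≤ M2 * |t - s| := this
    _ < ε := by
        have habs : |t - s| < ε / (M2 + 1) := by rwa [Real.norm_eq_abs] at ht
        have h3 : M2 * |t - s| < M2 * (ε / (M2 + 1)) :=
          mul_lt_mul_of_pos_left habs hM2pos
        have h4 : M2 * (ε / (M2 + 1)) ≤ ε := by
          rw [mul_comm, div_mul_eq_mul_div, div_le_iff₀ (by positivity : (0:ℝ) < M2 + 1)]
          nlinarith
        exact h3.trans_le h4
  -- uniform convergence on compact time intervals
  have hunif : ∀ sbar : ℝ, 0 ≤ sbar → ∀ δ₂ : ℝ, 0 < δ₂ →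
      ∀ᶠ k in (U : Filter ℕ), ∀ τ ∈ Set.Icc (0:ℝ) sbar, ‖v k τ - g τ‖ ≤ δ₂ := by
    intro sbar hsbar δ₂ hδ₂
    set rr : ℝ := δ₂ / (3 * (M2 + 1)) with hrr
    have hrr0 : 0 < rr := by positivity
    obtain ⟨t, ht⟩ := (isCompact_Icc (a := (0:ℝ)) (b := sbar)).elim_finite_subcover
      (fun τ : Set.Icc (0:ℝ) sbar => Metric.ball (τ : ℝ) rr)
      (fun τ => Metric.isOpen_ball)
      (fun τ hτ => Set.mem_iUnion.2 ⟨⟨τ, hτ⟩, Metric.mem_ball_self hrr0⟩)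
    have hptw : ∀ i ∈ t, ∀ᶠ k in (U : Filter ℕ),
        ‖v k (i : ℝ) - g (i : ℝ)‖ < δ₂ / 3 := by
      intro i _
      have hconv := hg_conv (i : ℝ) i.2.1
      rw [Metric.tendsto_nhds] at hconv
      filter_upwards [hconv (δ₂/3) (by positivity)] with k hk
      rwa [dist_eq_norm] at hk
    filter_upwards [(Filter.eventually_all_finset t).2 hptw, hlip] with k hk1 hk2
    intro τ hτ
    obtain ⟨i, hit, hiball⟩ : ∃ i ∈ t, τ ∈ Metric.ball (i : ℝ) rr := by
      have := ht hτ
      simpa using this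
    have hd1 : ‖v k τ - v k (i:ℝ)‖ ≤ M2 * rr := by
      refine (hk2 τ (i:ℝ) hτ.1 i.2.1).trans ?_
      have : |τ - (i:ℝ)| < rr := by rwa [Metric.mem_ball, Real.dist_eq] at hiball
      nlinarith [this, hM2pos]
    have hd3 : ‖g (i:ℝ) - g τ‖ ≤ M2 * rr := by
      refine (hg_lip (i:ℝ) τ).trans ?_
      have : |τ - (i:ℝ)| < rr := by rwa [Metric.mem_ball, Real.dist_eq] at hiball
      rw [abs_sub_comm] at this
      nlinarith [this, hM2pos]
    have hMrr : M2 * rr ≤ δ₂ / 3 := by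
      rw [hrr, mul_comm, div_mul_eq_mul_div,
        div_le_div_iff₀ (by positivity : (0:ℝ) < 3*(M2+1)) (by norm_num : (0:ℝ) < 3)]
      nlinarith [hδ₂.le, hM2pos.le]
    calc ‖v k τ - g τ‖ = ‖(v k τ - v k (i:ℝ)) + ((v k (i:ℝ) - g (i:ℝ)) + (g (i:ℝ) - g τ))‖ := by
          congr 1; abel
    _ ≤ ‖v k τ - v k (i:ℝ)‖ + (‖v k (i:ℝ) - g (i:ℝ)‖ + ‖g (i:ℝ) - g τ‖) := by
          refine (norm_add_le _ _).trans ?_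
          exact add_le_add_right (norm_add_le _ _) _
    _ ≤ δ₂/3 + (δ₂/3 + δ₂/3) := by
          refine add_le_add (hd1.trans hMrr) (add_le_add (hk1 i hit).le (hd3.trans hMrr))
    _ = δ₂ := by ring
  -- FTC for the approximate solutions
  have hftc : ∀ᶠ k in (U : Filter ℕ), ∀ s : ℝ, 0 ≤ s →
      v k s = v k 0 + ∫ τ in (0:ℝ)..s, D k τ := by
    filter_upwards [h_ode, h_Dcont] with k hk1 hk2
    intro s hs
    have hint : IntervalIntegrable (D k) MeasureTheory.volume 0 s := by
      apply ContinuousOn.intervalIntegrable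
      rw [Set.uIcc_of_le hs]
      exact hk2.mono (fun x hx => hx.1)
    have hsub := intervalIntegral.integral_eq_sub_of_hasDerivAt
      (f := v k) (f' := D k) (fun t htm => hk1 t (by
        rw [Set.uIcc_of_le hs] at htm; exact htm.1)) hint
    rw [hsub]
    abel
  have hvcont : ∀ᶠ k in (U : Filter ℕ), ContinuousOn (v k) (Set.Ici 0) := by
    filter_upwards [h_ode] with k hk
    exact fun s hs => ((hk s hs).continuousAt).continuousWithinAt
  -- integral equation for the limit
  have hie : ∀ s : ℝ, 0 ≤ s → g s = g 0 + ∫ τ in (0:ℝ)..s, fH (g τ) := by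
    intro s hs
    have h0 : Tendsto (fun k => v k 0) (U : Filter ℕ) (𝓝 (g 0)) := hg_conv 0 le_rfl
    have hInt : Tendsto (fun k => ∫ τ in (0:ℝ)..s, D k τ) (U : Filter ℕ)
        (𝓝 (∫ τ in (0:ℝ)..s, fH (g τ))) := by
      rw [Metric.tendsto_nhds]
      intro ε hε
      obtain ⟨δ₂, hδ₂0, hδ₂⟩ := Metric.uniformContinuousOn_iff.mp
        ((isCompact_closedBall (0 : Fin m → ℝ) 1).uniformContinuousOn_of_continuous
          hfH_cont.continuousOn) (ε/(2*(s+1))) (by positivity)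
      filter_upwards [hunif s hs (δ₂/2) (by positivity),
        h_small (ε/(2*(s+1))) (by positivity), hftc, h_Dcont, hvcont, h_bdd]
        with k hk1 hk2 hk3 hk4 hk5 hk6
      have hiDk : IntervalIntegrable (D k) MeasureTheory.volume 0 s := by
        apply ContinuousOn.intervalIntegrable
        rw [Set.uIcc_of_le hs]
        exact hk4.mono (fun x hx => hx.1)
      have hig : IntervalIntegrable (fun τ => fH (g τ)) MeasureTheory.volume 0 s :=
        (hfH_cont.comp hg_cont).intervalIntegrable 0 s
      have hivk : IntervalIntegrable (fun τ => fH (v k τ)) MeasureTheory.volume 0 s := by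
        apply ContinuousOn.intervalIntegrable
        rw [Set.uIcc_of_le hs]
        exact hfH_cont.comp_continuousOn (hk5.mono (fun x hx => hx.1))
      rw [dist_eq_norm, ← intervalIntegral.integral_sub hiDk hig]
      have hsplit : (fun τ => D k τ - fH (g τ)) =
          fun τ => (D k τ - fH (v k τ)) + (fH (v k τ) - fH (g τ)) := by
        funext τ; abel
      rw [hsplit, intervalIntegral.integral_add (hiDk.sub hivk) (hivk.sub hig)]
      have hb1 : ‖∫ τ in (0:ℝ)..s, (D k τ - fH (v k τ))‖ ≤ (ε/(2*(s+1))) * |s - 0| := by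
        refine intervalIntegral.norm_integral_le_of_norm_le_const fun x hx => ?_
        rw [Set.uIoc_of_le hs] at hx
        exact hk2 x hx.1.le
      have hb2 : ‖∫ τ in (0:ℝ)..s, (fH (v k τ) - fH (g τ))‖ ≤ (ε/(2*(s+1))) * |s - 0| := by
        refine intervalIntegral.norm_integral_le_of_norm_le_const fun x hx => ?_
        rw [Set.uIoc_of_le hs] at hx
        have hdist : dist (v k x) (g x) < δ₂ := by
          rw [dist_eq_norm]
          calc ‖v k x - g x‖ ≤ δ₂/2 := hk1 x ⟨hx.1.le, hx.2⟩
          _ < δ₂ := by linarith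
        have := hδ₂ (v k x) (by
            simpa [Metric.mem_closedBall, dist_zero_right] using hk6 x hx.1.le)
          (g x) (by simpa [Metric.mem_closedBall, dist_zero_right] using hg_bdd x)
          hdist
        rw [dist_eq_norm] at this
        exact this.le
      have habs : |s - (0:ℝ)| = s := by rw [sub_zero, abs_of_nonneg hs]
      calc ‖(∫ τ in (0:ℝ)..s, (D k τ - fH (v k τ)))
            + ∫ τ in (0:ℝ)..s, (fH (v k τ) - fH (g τ))‖
          ≤ (ε/(2*(s+1))) * |s - 0| + (ε/(2*(s+1))) * |s - 0| :=
            (norm_add_le _ _).trans (add_le_add hb1 hb2)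
      _ = ε * (s / (s+1)) := by
            rw [habs]
            have hs1 : (s:ℝ) + 1 ≠ 0 := by positivity
            field_simp
            ring
      _ < ε * 1 := by
            refine mul_lt_mul_of_pos_left ?_ hε
            rw [div_lt_one (by positivity)]
            linarith
      _ = ε := mul_one ε
    have hev : (fun k => v k 0 + ∫ τ in (0:ℝ)..s, D k τ) =ᶠ[(U : Filter ℕ)]
        (fun k => v k s) := by
      filter_upwards [hftc] with k hk using (hk s hs).symm
    exact tendsto_nhds_unique (hg_conv s hs) (Tendsto.congr' hev (h0.add hInt))
  -- the limit solution
  set Y : ℝ → (Fin m → ℝ) := fun t => g 0 + ∫ τ in (0:ℝ)..t, fH (g τ) with hYdef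
  have hYg : ∀ s : ℝ, 0 ≤ s → Y s = g s := fun s hs => (hie s hs).symm
  have hYd : ∀ t : ℝ, HasDerivAt Y (fH (g t)) t := by
    intro t
    have hcont : Continuous (fun τ => fH (g τ)) := hfH_cont.comp hg_cont
    have := intervalIntegral.integral_hasDerivAt_right (hcont.intervalIntegrable 0 t)
      (hcont.stronglyMeasurableAtFilter _ _) hcont.continuousAt
    exact this.const_add (g 0)
  refine ⟨Y, fun t ht => ?_, fun s hs => ?_, fun s hs => ?_, M2, hM2pos, hlip, ?_⟩
  · rw [hYg t ht]
    exact hYd t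
  · rw [hYg s hs]
    exact hg_conv s hs
  · rw [hYg s hs]
    exact hg_bdd s
  · intro s t
    have key := (convex_univ (𝕜 := ℝ) (E := ℝ)).norm_image_sub_le_of_norm_hasDerivWithin_le
      (f := Y) (f' := fun τ => fH (g τ)) (C := M2)
      (fun x _ => (hYd x).hasDerivWithinAt)
      (fun x _ => (hfHb _ (hg_bdd x)).trans (by rw [hM2def]; linarith))
      (Set.mem_univ t) (Set.mem_univ s)
    simpa [Real.norm_eq_abs] using key

/-- By homogeneity, attractivity from a small ball implies attractivity of every
global solution of the homogeneous system. -/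
lemma allSolTendsto {m : ℕ} [Nonempty (Fin m)] (r : Fin m → ℝ) (hr : ∀ j, 0 < r j)
    (lr : ℝ) (fH : (Fin m → ℝ) → (Fin m → ℝ))
    (hfH_hom : ∀ ε : ℝ, 0 < ε → ∀ x : Fin m → ℝ, ∀ j,
      fH (fun i => ε ^ r i * x i) j = ε ^ lr * (ε ^ r j * fH x j))
    (hfH_attr : ∃ δ : ℝ, 0 < δ ∧ ∀ y : ℝ → (Fin m → ℝ),
      (∀ t : ℝ, 0 ≤ t → HasDerivAt y (fH (y t)) t) → ‖y 0‖ < δ →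
        Tendsto y atTop (𝓝 0))
    (Y : ℝ → (Fin m → ℝ)) (hY : ∀ t : ℝ, 0 ≤ t → HasDerivAt Y (fH (Y t)) t) :
    Tendsto Y atTop (𝓝 0) := by
  obtain ⟨δ₀, hδ₀, hattr⟩ := hfH_attr
  set rmin : ℝ := Finset.univ.inf' Finset.univ_nonempty r with hrmindef
  have hrmin : 0 < rmin := by
    obtain ⟨j, -, hj⟩ := Finset.exists_mem_eq_inf' Finset.univ_nonempty r
    rw [hrmindef, hj]; exact hr j
  have hrminle : ∀ j, rmin ≤ r j := fun j => Finset.inf'_le r (Finset.mem_univ j)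
  set c : ℝ := min 1 (δ₀ / (2 * (‖Y 0‖ + 1))) with hcdef
  have hc0 : 0 < c := lt_min one_pos (by positivity)
  have hc1 : c ≤ 1 := min_le_left _ _
  set lam : ℝ := c ^ rmin⁻¹ with hlamdef
  have hlam0 : 0 < lam := Real.rpow_pos_of_pos hc0 _
  have hlam1 : lam ≤ 1 := Real.rpow_le_one hc0.le hc1 (inv_nonneg.2 hrmin.le)
  have hlamrmin : lam ^ rmin = c := Real.rpow_inv_rpow hc0.le hrmin.ne'
  have hlamlr : (0:ℝ) < lam ^ lr := Real.rpow_pos_of_pos hlam0 _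
  set Z : ℝ → (Fin m → ℝ) := fun t => fun j => lam ^ r j * Y (lam ^ lr * t) j with hZdef
  have hZd : ∀ t : ℝ, 0 ≤ t → HasDerivAt Z (fH (Z t)) t := by
    intro t ht
    refine hasDerivAt_pi.2 fun j => ?_
    have hY' := hY (lam ^ lr * t) (by positivity)
    have hYj : HasDerivAt (fun u => Y u j) (fH (Y (lam ^ lr * t)) j) (lam ^ lr * t) :=
      hasDerivAt_pi.1 hY' j
    have hinner : HasDerivAt (fun u : ℝ => lam ^ lr * u) (lam ^ lr) t := by
      simpa using (hasDerivAt_id t).const_mul (lam ^ lr)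
    have hcomp : HasDerivAt (fun u => Y (lam ^ lr * u) j)
        (fH (Y (lam ^ lr * t)) j * lam ^ lr) t := hYj.comp t hinner
    have := hcomp.const_mul (lam ^ r j)
    refine this.congr_deriv ?_
    symm
    have hh := hfH_hom lam hlam0 (Y (lam ^ lr * t)) j
    calc fH (Z t) j = lam ^ lr * (lam ^ r j * fH (Y (lam ^ lr * t)) j) := hh
    _ = lam ^ r j * (fH (Y (lam ^ lr * t)) j * lam ^ lr) := by ring
  have hZ0 : ‖Z 0‖ < δ₀ := by
    have hb : ∀ j, ‖Z 0 j‖ ≤ δ₀ / 2 := by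
      intro j
      have h1 : |Y 0 j| ≤ ‖Y 0‖ := by
        have := norm_le_pi_norm (Y 0) j
        rwa [Real.norm_eq_abs] at this
      have h2 : lam ^ r j ≤ c := by
        rw [← hlamrmin]
        exact Real.rpow_le_rpow_of_exponent_ge hlam0 hlam1 (hrminle j)
      have h3 : c ≤ δ₀ / (2 * (‖Y 0‖ + 1)) := min_le_right _ _
      have hY0 : (0:ℝ) ≤ ‖Y 0‖ := norm_nonneg _
      rw [hZdef]
      simp only [Real.norm_eq_abs, mul_zero]
      rw [abs_mul, abs_of_nonneg (Real.rpow_pos_of_pos hlam0 _).le]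
      calc lam ^ r j * |Y 0 j| ≤ c * ‖Y 0‖ :=
            mul_le_mul h2 h1 (abs_nonneg _) hc0.le
      _ ≤ (δ₀ / (2 * (‖Y 0‖ + 1))) * (‖Y 0‖ + 1) := by
            refine mul_le_mul h3 (by linarith) hY0 (by positivity)
      _ = δ₀ / 2 := by field_simp
    calc ‖Z 0‖ ≤ δ₀/2 := (pi_norm_le_iff_of_nonneg (by positivity)).2 hb
    _ < δ₀ := by linarith
  have hZconv : Tendsto Z atTop (𝓝 0) := hattr Z hZd hZ0
  -- recover the convergence of Y
  have hrec : ∀ t : ℝ, Y t = fun j => (lam ^ r j)⁻¹ * Z (lam ^ (-lr) * t) j := by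
    intro t
    funext j
    have harg : lam ^ lr * (lam ^ (-lr) * t) = t := by
      rw [← mul_assoc, ← Real.rpow_add hlam0, add_neg_cancel, Real.rpow_zero, one_mul]
    rw [hZdef]
    simp only [harg]
    rw [← mul_assoc, inv_mul_cancel₀ (ne_of_gt (Real.rpow_pos_of_pos hlam0 _)), one_mul]
  have hA : Tendsto (fun t : ℝ => lam ^ (-lr) * t) atTop atTop :=
    Tendsto.const_mul_atTop (Real.rpow_pos_of_pos hlam0 _) tendsto_id
  have hS : Continuous (fun q : Fin m → ℝ => fun j => (lam ^ r j)⁻¹ * q j) :=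
    continuous_pi fun j => continuous_const.mul (continuous_apply j)
  have hcomp := (hS.tendsto 0).comp (hZconv.comp hA)
  have h0 : (fun j => (lam ^ r j)⁻¹ * (0 : Fin m → ℝ) j) = (0 : Fin m → ℝ) := by
    funext j; simp
  rw [h0] at hcomp
  exact hcomp.congr fun t => (hrec t).symm


set_option maxHeartbeats 2000000 in
/-- Lemma 2: if the system `ẋ = f(x)` admits a homogeneous approximation `f_H` of
negative degree whose origin is asymptotically stable, the non-homogeneous remainder
satisfies the uniform vanishing condition, and the origin of `ẋ = f(x)` is globally
asymptotically stable, then the origin of `ẋ = f(x)` is globally finite-time stable. -/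
theorem stmt5 (m : ℕ) (r : Fin m → ℝ) (hr : ∀ j, 0 < r j) (lr : ℝ) (hlr : lr < 0)
    (f fH fNH : (Fin m → ℝ) → (Fin m → ℝ))
    (hf_cont : Continuous f) (hf0 : f 0 = 0)
    (hsplit : ∀ x, f x = fH x + fNH x)
    (hfH_cont : Continuous fH)
    (hfH_hom : ∀ ε : ℝ, 0 < ε → ∀ x : Fin m → ℝ, ∀ j,
      fH (fun i => ε ^ r i * x i) j = ε ^ lr * (ε ^ r j * fH x j))
    -- the origin of `ẋ = f_H(x)` is (locally) asymptotically stable: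
    (hfH_stab : ∀ ε : ℝ, 0 < ε → ∃ δ : ℝ, 0 < δ ∧
      ∀ y : ℝ → (Fin m → ℝ), (∀ t : ℝ, 0 ≤ t → HasDerivAt y (fH (y t)) t) →
        ‖y 0‖ < δ → ∀ t : ℝ, 0 ≤ t → ‖y t‖ < ε)
    (hfH_attr : ∃ δ : ℝ, 0 < δ ∧
      ∀ y : ℝ → (Fin m → ℝ), (∀ t : ℝ, 0 ≤ t → HasDerivAt y (fH (y t)) t) →
        ‖y 0‖ < δ → Tendsto y atTop (𝓝 0))
    (hfNH_cont : Continuous fNH) (hfNH0 : fNH 0 = 0)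
    -- vanishing condition, uniformly w.r.t. `x` on the unit sphere:
    (hvanish : ∀ j : Fin m, ∀ η : ℝ, 0 < η → ∃ ε₀ : ℝ, 0 < ε₀ ∧
      ∀ ε : ℝ, 0 < ε → ε < ε₀ → ∀ x : Fin m → ℝ, ‖x‖ = 1 →
        |ε ^ (-(lr + r j)) * fNH (fun i => ε ^ r i * x i) j| < η)
    -- the given flow of `ẋ = f(x)`: solutions exist and are unique in forward time
    (sol : (Fin m → ℝ) → ℝ → (Fin m → ℝ))
    (hsol0 : ∀ x₀, sol x₀ 0 = x₀)
    (hsol : ∀ x₀, ∀ t : ℝ, 0 ≤ t → HasDerivAt (sol x₀) (f (sol x₀ t)) t)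
    (huniq : ∀ x₀, ∀ y : ℝ → (Fin m → ℝ), y 0 = x₀ →
      (∀ t : ℝ, 0 ≤ t → HasDerivAt y (f (y t)) t) → ∀ t : ℝ, 0 ≤ t → y t = sol x₀ t)
    -- the origin of `ẋ = f(x)` is globally asymptotically stable:
    (hGAS_stab : ∀ ε : ℝ, 0 < ε → ∃ δ : ℝ, 0 < δ ∧
      ∀ x₀ : Fin m → ℝ, ‖x₀‖ < δ → ∀ t : ℝ, 0 ≤ t → ‖sol x₀ t‖ < ε)
    (hGAS_attr : ∀ x₀ : Fin m → ℝ, Tendsto (sol x₀) atTop (𝓝 0)) :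
    -- conclusion: global finite-time stability of the origin of `ẋ = f(x)`
    (∀ ε : ℝ, 0 < ε → ∃ δ : ℝ, 0 < δ ∧
      ∀ x₀ : Fin m → ℝ, ‖x₀‖ < δ → ∀ t : ℝ, 0 ≤ t → ‖sol x₀ t‖ < ε) ∧
    (∀ x₀ : Fin m → ℝ, ∃ T : ℝ, 0 ≤ T ∧ ∀ t : ℝ, T ≤ t → sol x₀ t = 0) := by
  classical
  refine ⟨hGAS_stab, ?_⟩
  -- the zero solution
  have hzero : ∀ t : ℝ, 0 ≤ t → sol 0 t = 0 := by
    intro t ht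
    have h := huniq 0 (fun _ => 0) rfl (fun s hs => by
      simpa [hf0] using (hasDerivAt_const s (0 : Fin m → ℝ)))
    exact (h t ht).symm
  -- the semigroup property
  have hsemi : ∀ z : Fin m → ℝ, ∀ a : ℝ, 0 ≤ a → ∀ t : ℝ, 0 ≤ t →
      sol z (a + t) = sol (sol z a) t := by
    intro z a ha t ht
    have hshift : ∀ s : ℝ, 0 ≤ s →
        HasDerivAt (fun u => sol z (a + u)) (f (sol z (a + s))) s := by
      intro s hs
      have h1 := hsol z (a + s) (by linarith)
      have hinner : HasDerivAt (fun u : ℝ => a + u) 1 s := by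
        simpa using (hasDerivAt_id s).const_add a
      have := h1.scomp s hinner
      rw [one_smul] at this; exact this
    have := huniq (sol z a) (fun u => sol z (a + u)) (by simp) hshift t ht
    simpa using this
  have hstay : ∀ z : Fin m → ℝ, ∀ t₀ : ℝ, 0 ≤ t₀ → sol z t₀ = 0 →
      ∀ t : ℝ, t₀ ≤ t → sol z t = 0 := by
    intro z t₀ ht₀ hz t ht
    have h1 : sol z (t₀ + (t - t₀)) = sol (sol z t₀) (t - t₀) :=
      hsemi z t₀ ht₀ _ (by linarith)
    rw [hz, hzero _ (by linarith)] at h1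
    have : t₀ + (t - t₀) = t := by ring
    rwa [this] at h1
  intro x₀
  by_cases hx₀ : ∃ t : ℝ, 0 ≤ t ∧ sol x₀ t = 0
  · obtain ⟨T, hT0, hT⟩ := hx₀
    exact ⟨T, hT0, fun t ht => hstay x₀ T hT0 hT t ht⟩
  exfalso
  push_neg at hx₀
  have hne : ∀ t : ℝ, 0 ≤ t → sol x₀ t ≠ 0 := hx₀
  have hx₀ne : x₀ ≠ 0 := by
    have := hne 0 le_rfl
    rwa [hsol0] at this
  have hmN : Nonempty (Fin m) := by
    obtain ⟨j, -⟩ : ∃ j, x₀ j ≠ 0 := by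
      by_contra h; push_neg at h; exact hx₀ne (funext h)
    exact ⟨j⟩
  set x : ℝ → (Fin m → ℝ) := sol x₀ with hxdef
  have hxcont : ContinuousOn x (Set.Ici 0) :=
    fun t ht => ((hsol x₀ t ht).continuousAt).continuousWithinAt
  set Nx : ℝ → ℝ := fun t => hN r (x t) with hNxdef
  have hNxcont : ContinuousOn Nx (Set.Ici 0) :=
    (hN_continuous r hr).comp_continuousOn hxcont
  have hNxpos : ∀ t : ℝ, 0 ≤ t → 0 < Nx t := fun t ht => hN_pos r hr _ (hne t ht)
  have hNxlim : Tendsto Nx atTop (𝓝 0) := by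
    have := ((hN_continuous r hr).tendsto 0).comp (hGAS_attr x₀)
    rwa [hN_zero r hr] at this
  set N₀ : ℝ := Nx 0 with hN₀def
  have hN₀pos : 0 < N₀ := hNxpos 0 le_rfl
  -- last exit times
  set L : ℝ → ℝ := fun ρ => sSup {t : ℝ | 0 ≤ t ∧ ρ ≤ Nx t} with hLdef
  have hLspec : ∀ ρ : ℝ, 0 < ρ → ρ ≤ N₀ →
      0 ≤ L ρ ∧ Nx (L ρ) = ρ ∧ (∀ t, L ρ < t → Nx t < ρ) ∧
        (∀ t, 0 ≤ t → ρ ≤ Nx t → t ≤ L ρ) := by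
    intro ρ hρ0 hρN
    set S : Set ℝ := {t : ℝ | 0 ≤ t ∧ ρ ≤ Nx t} with hSdef
    have hS0 : (0:ℝ) ∈ S := ⟨le_rfl, hρN⟩
    have hbdd : BddAbove S := by
      obtain ⟨T₀, hT₀⟩ := (eventually_atTop).1 (hNxlim.eventually (Iio_mem_nhds hρ0))
      refine ⟨T₀, fun t htS => ?_⟩
      by_contra hc
      push_neg at hc
      exact absurd htS.2 (not_le.2 (hT₀ t hc.le))
    have hclosed : IsClosed S := by
      have : S = Set.Ici 0 ∩ Nx ⁻¹' (Set.Ici ρ) := by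
        ext t; simp [hSdef, Set.mem_Ici, and_comm]
      rw [this]
      exact hNxcont.preimage_isClosed_of_isClosed isClosed_Ici isClosed_Ici
    have hmem : L ρ ∈ S := hclosed.csSup_mem ⟨0, hS0⟩ hbdd
    have hgt : ∀ t, L ρ < t → Nx t < ρ := by
      intro t htg
      have ht0 : 0 ≤ t := hmem.1.trans htg.le
      by_contra hc
      push_neg at hc
      exact absurd (le_csSup hbdd ⟨ht0, hc⟩) (not_le.2 htg)
    have heq : Nx (L ρ) = ρ := by
      refine le_antisymm ?_ hmem.2
      have htend : Tendsto Nx (𝓝[>] (L ρ)) (𝓝 (Nx (L ρ))) := by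
        have hca : ContinuousAt Nx (L ρ) :=
          (hN_continuous r hr).continuousAt.comp ((hsol x₀ (L ρ) hmem.1).continuousAt)
        exact hca.continuousWithinAt.tendsto
      refine le_of_tendsto htend ?_
      filter_upwards [self_mem_nhdsWithin] with t ht
      exact (hgt t ht).le
    exact ⟨hmem.1, heq, hgt, fun t h1 h2 => le_csSup hbdd ⟨h1, h2⟩⟩
  -- the key quantitative claim, or its negation
  by_cases hP : ∃ ρbar : ℝ, (0 < ρbar ∧ ρbar ≤ N₀) ∧ ∃ C : ℝ, 0 < C ∧
      ∀ ρ : ℝ, 0 < ρ → ρ ≤ ρbar → L (ρ/2) ≤ L ρ + C * ρ ^ (-lr)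
  · obtain ⟨ρbar, ⟨hρbar0, hρbarN⟩, C, hC0, hCb⟩ := hP
    set q : ℝ := (2:ℝ) ^ lr with hqdef
    have hq0 : 0 < q := Real.rpow_pos_of_pos two_pos lr
    have hq1 : q < 1 := Real.rpow_lt_one_of_one_lt_of_neg one_lt_two hlr
    have hgeom : ∀ n : ℕ, ∑ i ∈ Finset.range n, q ^ i ≤ (1 - q)⁻¹ := by
      intro n
      rw [geom_sum_eq (ne_of_lt hq1) n, div_le_iff_of_neg (by linarith : q - 1 < 0)]
      have h2 : (1 - q)⁻¹ * (q - 1) = -1 := by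
        rw [inv_mul_eq_div, div_eq_iff (by linarith : (1:ℝ) - q ≠ 0)]
        ring
      rw [h2]
      nlinarith [pow_nonneg hq0.le n]
    have hrpow : ∀ n : ℕ, (ρbar / 2^n) ^ (-lr) = ρbar ^ (-lr) * q ^ n := by
      intro n
      have h2n : (0:ℝ) < (2:ℝ) ^ n := by positivity
      rw [Real.div_rpow hρbar0.le h2n.le, div_eq_mul_inv]
      congr 1
      rw [← Real.rpow_natCast (2:ℝ) n, ← Real.rpow_mul (by norm_num : (0:ℝ) ≤ 2),
        ← Real.rpow_neg (by norm_num : (0:ℝ) ≤ 2)]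
      rw [hqdef, ← Real.rpow_natCast ((2:ℝ) ^ lr) n,
        ← Real.rpow_mul (by norm_num : (0:ℝ) ≤ 2)]
      congr 1
      ring
    have hLind : ∀ n : ℕ, L (ρbar / 2^n) ≤ L ρbar + C * ρbar ^ (-lr) *
        ∑ i ∈ Finset.range n, q ^ i := by
      intro n
      induction n with
      | zero => simp
      | succ n ih =>
        have hρn0 : 0 < ρbar / 2^n := by positivity
        have hρn : ρbar / 2^n ≤ ρbar := by
          rw [div_le_iff₀ (by positivity : (0:ℝ) < (2:ℝ)^n)]
          nlinarith [one_le_pow₀ (by norm_num : (1:ℝ) ≤ 2) (n := n)]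
        have hb := hCb (ρbar / 2^n) hρn0 hρn
        have harg : ρbar / 2^n / 2 = ρbar / 2^(n+1) := by
          rw [div_div, pow_succ]
        rw [harg, hrpow n] at hb
        calc L (ρbar / 2^(n+1)) ≤ L (ρbar/2^n) + C * (ρbar^(-lr) * q^n) := hb
        _ ≤ (L ρbar + C * ρbar ^ (-lr) * ∑ i ∈ Finset.range n, q ^ i)
            + C * (ρbar^(-lr) * q^n) := add_le_add_left ih _
        _ = L ρbar + C * ρbar ^ (-lr) * ∑ i ∈ Finset.range (n+1), q ^ i := by
            rw [Finset.sum_range_succ]; ring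
    have hcoef : 0 ≤ C * ρbar ^ (-lr) :=
      mul_nonneg hC0.le (Real.rpow_nonneg hρbar0.le _)
    set A : ℝ := L ρbar + C * ρbar ^ (-lr) * (1 - q)⁻¹ with hAdef
    have hLA : ∀ n : ℕ, L (ρbar / 2^n) ≤ A := by
      intro n
      refine (hLind n).trans ?_
      rw [hAdef]
      exact add_le_add_right (mul_le_mul_of_nonneg_left (hgeom n) hcoef) _
    have hA0 : 0 ≤ A := by
      have h1 := (hLspec ρbar hρbar0 hρbarN).1
      have h2 : 0 ≤ (1 - q)⁻¹ := inv_nonneg.2 (by linarith)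
      rw [hAdef]
      nlinarith
    have ht0 : (0:ℝ) ≤ A + 1 := by linarith
    have hNt : 0 < Nx (A + 1) := hNxpos _ ht0
    obtain ⟨n, hn⟩ := exists_pow_lt_of_lt_one
      (show (0:ℝ) < Nx (A+1) / ρbar by positivity) (by norm_num : (1/2:ℝ) < 1)
    have hρn : ρbar / 2^n ≤ Nx (A+1) := by
      have h1 : ((1:ℝ)/2)^n = 1/2^n := by rw [div_pow, one_pow]
      rw [h1] at hn
      have h2 : ρbar * (1/2^n) < Nx (A+1) := by
        rw [lt_div_iff₀ hρbar0] at hn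
        calc ρbar * (1/2^n) = 1/2^n * ρbar := by ring
        _ < Nx (A+1) := hn
      calc ρbar / 2^n = ρbar * (1/2^n) := by ring
      _ ≤ Nx (A+1) := h2.le
    have hρsmall : ρbar / 2^n ≤ N₀ := by
      refine le_trans ?_ hρbarN
      rw [div_le_iff₀ (by positivity : (0:ℝ) < (2:ℝ)^n)]
      nlinarith [one_le_pow₀ (by norm_num : (1:ℝ) ≤ 2) (n := n)]
    have hle := (hLspec (ρbar/2^n) (by positivity) hρsmall).2.2.2 (A+1) ht0 hρn
    linarith [hLA n]
  · -- extract a bad sequence from the negation of the claim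
    have hbad : ∀ k : ℕ, ∃ ρ : ℝ, (0 < ρ ∧ ρ ≤ min N₀ (1/(k+1))) ∧
        L ρ + ((k:ℝ)+1) * ρ ^ (-lr) < L (ρ/2) := by
      intro k
      by_contra hcon
      push_neg at hcon
      refine hP ⟨min N₀ (1/((k:ℝ)+1)), ⟨?_, min_le_left _ _⟩, (k:ℝ)+1, by positivity, ?_⟩
      · positivity
      · intro ρ hρ0' hρle
        have := hcon ρ ⟨hρ0', hρle⟩
        linarith
    choose ρs hρs using hbad
    have hρ0 : ∀ k, 0 < ρs k := fun k => (hρs k).1.1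
    have hρN : ∀ k, ρs k ≤ N₀ := fun k => (hρs k).1.2.trans (min_le_left _ _)
    have hρk : ∀ k : ℕ, ρs k ≤ 1/((k:ℝ)+1) := fun k => (hρs k).1.2.trans (min_le_right _ _)
    set Lk : ℕ → ℝ := fun k => L (ρs k) with hLkdef
    have hLk := fun k => hLspec (ρs k) (hρ0 k) (hρN k)
    have hLk2 := fun k => hLspec (ρs k / 2) (half_pos (hρ0 k))
      (by linarith [hρN k, (hρ0 k).le] : ρs k / 2 ≤ N₀)
    set σ : ℕ → ℝ := fun k => (L (ρs k / 2) - Lk k) * (ρs k) ^ lr with hσdef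
    have hρcollapse : ∀ k, (ρs k) ^ (-lr) * (ρs k) ^ lr = 1 := fun k => by
      rw [← Real.rpow_add (hρ0 k), neg_add_cancel, Real.rpow_zero]
    have hσ : ∀ k : ℕ, (k:ℝ) + 1 < σ k := by
      intro k
      have h1 := (hρs k).2
      have h2 : 0 < (ρs k) ^ lr := Real.rpow_pos_of_pos (hρ0 k) lr
      have h3 : ((k:ℝ)+1) * (ρs k)^(-lr) < L (ρs k/2) - Lk k := by
        simp only [hLkdef]; linarith
      have h4 := mul_lt_mul_of_pos_right h3 h2
      calc (k:ℝ)+1 = ((k:ℝ)+1) * ((ρs k)^(-lr) * (ρs k)^lr) := by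
            rw [hρcollapse k, mul_one]
      _ = ((k:ℝ)+1) * (ρs k)^(-lr) * (ρs k)^lr := by ring
      _ < (L (ρs k/2) - Lk k) * (ρs k)^lr := h4
    have hσ0 : ∀ k, 0 < σ k := fun k => lt_trans (by positivity) (hσ k)
    -- rescaled trajectories
    set tk : ℕ → ℝ → ℝ := fun k s => Lk k + (ρs k) ^ (-lr) * s with htkdef
    set w : ℕ → ℝ → (Fin m → ℝ) :=
      fun k s => fun j => (ρs k) ^ (-(r j)) * x (tk k s) j with hwdef
    set G : ℕ → ℝ → (Fin m → ℝ) :=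
      fun k s => fun j => (ρs k) ^ (-(lr + r j)) * fNH (x (tk k s)) j with hGdef
    set D : ℕ → ℝ → (Fin m → ℝ) := fun k s => fun j => fH (w k s) j + G k s j with hDdef
    have htk0 : ∀ k (s : ℝ), 0 ≤ s → Lk k ≤ tk k s ∧ 0 ≤ tk k s := by
      intro k s hs
      have h1 : 0 ≤ (ρs k) ^ (-lr) * s :=
        mul_nonneg (Real.rpow_nonneg (hρ0 k).le _) hs
      constructor
      · simp only [htkdef]; linarith
      · have := (hLk k).1; simp only [htkdef]; linarith
    have hxw : ∀ k (s : ℝ), x (tk k s) = fun i => (ρs k) ^ (r i) * (w k s i) := by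
      intro k s
      funext i
      simp only [hwdef]
      rw [← mul_assoc, ← Real.rpow_add (hρ0 k), add_neg_cancel, Real.rpow_zero, one_mul]
    have hNw : ∀ k (s : ℝ), hN r (w k s) = (ρs k)⁻¹ * Nx (tk k s) := by
      intro k s
      have h1 := hN_dil r hr (ρs k)⁻¹ (inv_pos.2 (hρ0 k)) (x (tk k s))
      have h2 : (fun j => (ρs k)⁻¹ ^ (r j) * x (tk k s) j) = w k s := by
        funext j
        rw [Real.inv_rpow (hρ0 k).le, ← Real.rpow_neg (hρ0 k).le]
      rw [← h2]
      rw [h1]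
    have hNxle : ∀ k (t : ℝ), Lk k ≤ t → Nx t ≤ ρs k := by
      intro k t htk
      rcases eq_or_lt_of_le htk with heq | hlt
      · rw [← heq]; exact le_of_eq (hLk k).2.1
      · exact ((hLk k).2.2.1 t hlt).le
    have hNwle : ∀ k (s : ℝ), 0 ≤ s → hN r (w k s) ≤ 1 := by
      intro k s hs
      rw [hNw k s]
      rw [inv_mul_le_iff₀ (hρ0 k), mul_one]
      exact hNxle k _ (htk0 k s hs).1
    have hwnorm : ∀ k (s : ℝ), 0 ≤ s → ‖w k s‖ ≤ 1 :=
      fun k s hs => norm_le_one_of_hN_le_one r hr _ (hNwle k s hs)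
    have hNw0 : ∀ k, hN r (w k 0) = 1 := by
      intro k
      have : tk k 0 = Lk k := by simp [htkdef]
      rw [hNw k 0, this, (hLk k).2.1, inv_mul_cancel₀ (hρ0 k).ne']
    have htkσ : ∀ k, tk k (σ k) = L (ρs k / 2) := by
      intro k
      simp only [htkdef, hσdef]
      linear_combination (L (ρs k / 2) - Lk k) * hρcollapse k
    have hNwσ : ∀ k, hN r (w k (σ k)) = 1/2 := by
      intro k
      rw [hNw k (σ k), htkσ k, (hLk2 k).2.1]
      field_simp
      exact div_self (hρ0 k).ne'
    -- derivative of the rescaled trajectory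
    have hode : ∀ k (s : ℝ), 0 ≤ s → HasDerivAt (w k) (D k s) s := by
      intro k s hs
      have ht := (htk0 k s hs).2
      refine hasDerivAt_pi.2 fun j => ?_
      have hinner : HasDerivAt (fun u : ℝ => Lk k + (ρs k)^(-lr) * u)
          ((ρs k)^(-lr)) s := by
        simpa using ((hasDerivAt_id s).const_mul ((ρs k)^(-lr))).const_add (Lk k)
      have hxj : HasDerivAt (fun u => x u j) (f (x (tk k s)) j) (tk k s) :=
        hasDerivAt_pi.1 (hsol x₀ (tk k s) ht) j
      have hcomp : HasDerivAt (fun u => x (Lk k + (ρs k)^(-lr)*u) j)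
          (f (x (tk k s)) j * (ρs k)^(-lr)) s := hxj.comp s hinner
      have hfinal := hcomp.const_mul ((ρs k)^(-(r j)))
      refine hfinal.congr_deriv ?_
      symm
      have hxfe : f (x (tk k s)) j = fH (x (tk k s)) j + fNH (x (tk k s)) j := by
        rw [hsplit (x (tk k s))]; rfl
      have hfHt : fH (x (tk k s)) j = (ρs k)^lr * ((ρs k)^(r j) * fH (w k s) j) := by
        rw [hxw k s]
        exact hfH_hom (ρs k) (hρ0 k) (w k s) j
      have c1 : (ρs k)^(-(r j)) * (ρs k)^lr * (ρs k)^(r j) * (ρs k)^(-lr) = 1 := by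
        rw [← Real.rpow_add (hρ0 k), ← Real.rpow_add (hρ0 k), ← Real.rpow_add (hρ0 k)]
        have he : -(r j) + lr + (r j) + (-lr) = 0 := by ring
        rw [he, Real.rpow_zero]
      have c2 : (ρs k)^(-(r j)) * (ρs k)^(-lr) = (ρs k)^(-(lr + r j)) := by
        rw [← Real.rpow_add (hρ0 k)]
        congr 1
        ring
      simp only [hDdef, hGdef]
      rw [hxfe, hfHt]
      linear_combination (-(fH (w k s) j)) * c1 - (fNH (x (tk k s)) j) * c2
    -- continuity of the rescaled data
    have haffc : ∀ k : ℕ, Continuous (fun s : ℝ => Lk k + (ρs k)^(-lr) * s) :=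
      fun k => continuous_const.add (continuous_const.mul continuous_id)
    have hmaps : ∀ k : ℕ, Set.MapsTo (fun s : ℝ => Lk k + (ρs k)^(-lr) * s)
        (Set.Ici 0) (Set.Ici 0) := by
      intro k s hs
      have h1 : 0 ≤ (ρs k) ^ (-lr) * s :=
        mul_nonneg (Real.rpow_nonneg (hρ0 k).le _) hs
      have := (hLk k).1
      simp only [Set.mem_Ici] at *
      linarith
    have hxtk : ∀ k : ℕ, ContinuousOn (fun s => x (tk k s)) (Set.Ici 0) := by
      intro k
      simp only [htkdef]
      exact hxcont.comp (haffc k).continuousOn (hmaps k)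
    have hwcont : ∀ k : ℕ, ContinuousOn (w k) (Set.Ici 0) := by
      intro k
      simp only [hwdef]
      exact continuousOn_pi.2 fun j => continuousOn_const.mul
        ((continuous_apply j).comp_continuousOn (hxtk k))
    have hDcont : ∀ k : ℕ, ContinuousOn (D k) (Set.Ici 0) := by
      intro k
      simp only [hDdef, hGdef]
      refine continuousOn_pi.2 fun j => ContinuousOn.add ?_ ?_
      · exact (continuous_apply j).comp_continuousOn
          (hfH_cont.comp_continuousOn (hwcont k))
      · exact continuousOn_const.mul ((continuous_apply j).comp_continuousOn
          (hfNH_cont.comp_continuousOn (hxtk k)))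
    -- smallness of the perturbation
    have hsmall : ∀ ε : ℝ, 0 < ε → ∀ᶠ k in atTop,
        ∀ s : ℝ, 0 ≤ s → ‖D k s - fH (w k s)‖ ≤ ε := by
      intro ε hε
      obtain ⟨ρ', hρ'0, hρ'b⟩ := remainder_small r hr lr fNH hfNH_cont hfNH0 hvanish ε hε
      set K := Nat.ceil (1/ρ') with hKdef
      refine eventually_atTop.2 ⟨K, fun k hk => ?_⟩
      have hρsm : ρs k ≤ ρ' := by
        have h1 : (1:ℝ)/ρ' ≤ K := Nat.le_ceil _
        have h2 : ρs k ≤ 1/((k:ℝ)+1) := hρk k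
        have hkK : (K:ℝ) + 1 ≤ (k:ℝ) + 1 := by
          have : (K:ℝ) ≤ k := by exact_mod_cast hk
          linarith
        have h3 : (1:ℝ)/((k:ℝ)+1) ≤ 1/((K:ℝ)+1) :=
          one_div_le_one_div_of_le (by positivity) hkK
        have h4 : (1:ℝ)/((K:ℝ)+1) ≤ ρ' := by
          rw [div_le_iff₀ (by positivity : (0:ℝ) < (K:ℝ)+1)]
          have h5 : ρ' * (1/ρ') = 1 := by field_simp
          nlinarith [mul_le_mul_of_nonneg_left h1 hρ'0.le]
        linarith
      intro s hs
      refine (pi_norm_le_iff_of_nonneg hε.le).2 fun j => ?_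
      have hDG : (D k s - fH (w k s)) j = G k s j := by
        simp [hDdef]
      rw [hDG, hGdef]
      simp only [Real.norm_eq_abs]
      exact hρ'b (ρs k) (hρ0 k) hρsm (x (tk k s)) (hne _ (htk0 k s hs).2)
        (hNxle k _ (htk0 k s hs).1) j
    obtain ⟨U, hU⟩ := Ultrafilter.exists_le (atTop : Filter ℕ)
    have hmono : ∀ {p : ℕ → Prop}, (∀ᶠ k in atTop, p k) →
        (∀ᶠ k in (U : Filter ℕ), p k) := fun h => hU h
    obtain ⟨Y₁, hY₁sol, hY₁lim, hY₁bdd, C₁, hC₁pos, hC₁equi, hC₁lip⟩ :=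
      limitSolution fH hfH_cont U w D (Eventually.of_forall hode)
        (Eventually.of_forall hDcont) (Eventually.of_forall hwnorm)
        (fun ε hε => hmono (hsmall ε hε))
    have hY₁tend : Tendsto Y₁ atTop (𝓝 0) :=
      allSolTendsto r hr lr fH hfH_hom hfH_attr Y₁ hY₁sol
    -- stability constants
    obtain ⟨εs, hεs0, hεsp⟩ := norm_hN_control r hr (1/2) (by norm_num)
    obtain ⟨δ, hδ0, hδp⟩ := hfH_stab εs hεs0
    obtain ⟨η₀, hη₀0, hη₀p⟩ := hN_norm_control r hr δ hδ0
    set η : ℝ := min η₀ (1/4) with hηdef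
    have hη0 : 0 < η := lt_min hη₀0 (by norm_num)
    have hηhalf : η < 1/2 := lt_of_le_of_lt (min_le_right _ _) (by norm_num)
    have hηδ : ∀ q : Fin m → ℝ, hN r q ≤ η → ‖q‖ < δ :=
      fun q hq => hη₀p q (hq.trans (min_le_left _ _))
    -- a time where the first limit has small homogeneous norm
    have hNY₁ : Tendsto (fun s => hN r (Y₁ s)) atTop (𝓝 0) := by
      have := ((hN_continuous r hr).tendsto 0).comp hY₁tend
      rwa [hN_zero r hr] at this
    obtain ⟨s₁', hs₁'⟩ := eventually_atTop.1
      (hNY₁.eventually (Iio_mem_nhds (half_pos hη0)))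
    set s₁ : ℝ := max s₁' 0 with hs₁def
    have hs₁0 : 0 ≤ s₁ := le_max_right _ _
    have hY₁s₁ : hN r (Y₁ s₁) < η/2 := hs₁' s₁ (le_max_left _ _)
    have hks₁ : ∀ᶠ k in (U : Filter ℕ), hN r (w k s₁) < η := by
      have hlim := ((hN_continuous r hr).tendsto (Y₁ s₁)).comp (hY₁lim s₁ hs₁0)
      exact hlim.eventually (Iio_mem_nhds (by linarith))
    have hkσs : ∀ᶠ k in (U : Filter ℕ), s₁ + 1 ≤ σ k := by
      refine hmono (eventually_atTop.2 ⟨Nat.ceil s₁, fun k hk => ?_⟩)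
      have h1 : s₁ ≤ (k:ℝ) := le_trans (Nat.le_ceil _) (by exact_mod_cast hk)
      linarith [hσ k]
    set Ep : ℕ → Prop := fun k => hN r (w k s₁) < η ∧ s₁ + 1 ≤ σ k with hEpdef
    have hEp : ∀ᶠ k in (U : Filter ℕ), Ep k := hks₁.and hkσs
    set u : ℕ → ℝ := fun k => if Ep k then
      sSup {s : ℝ | s ∈ Set.Icc s₁ (σ k) ∧ hN r (w k s) ≤ η} else 0 with hudef
    set v : ℕ → ℝ := fun k => if Ep k then
      sInf {s : ℝ | s ∈ Set.Icc (u k) (σ k) ∧ 1/2 ≤ hN r (w k s)} else 0 with hvdef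
    have hNwkcont : ∀ k, ContinuousOn (fun s => hN r (w k s)) (Set.Ici 0) :=
      fun k => (hN_continuous r hr).comp_continuousOn (hwcont k)
    have huspec : ∀ k : ℕ, Ep k → u k ∈ Set.Icc s₁ (σ k) ∧ hN r (w k (u k)) ≤ η ∧
        ∀ s, u k < s → s ≤ σ k → η < hN r (w k s) := by
      intro k hEpk
      set A : Set ℝ := {s : ℝ | s ∈ Set.Icc s₁ (σ k) ∧ hN r (w k s) ≤ η} with hAdef
      have hs₁σ : s₁ ≤ σ k := by linarith [hEpk.2]
      have hA0 : s₁ ∈ A := ⟨⟨le_rfl, hs₁σ⟩, (hEpk.1).le⟩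
      have hAbdd : BddAbove A := ⟨σ k, fun t htA => htA.1.2⟩
      have hAclosed : IsClosed A := by
        have hAeq : A = Set.Icc s₁ (σ k) ∩
            (fun s => hN r (w k s)) ⁻¹' (Set.Iic η) := by
          ext t; simp only [hAdef, Set.mem_setOf_eq, Set.mem_inter_iff,
            Set.mem_preimage, Set.mem_Iic]
        rw [hAeq]
        exact ((hNwkcont k).mono
          (fun t ht' => le_trans hs₁0 ht'.1)).preimage_isClosed_of_isClosed
          isClosed_Icc isClosed_Iic
      have humem : u k ∈ A := by
        rw [hudef]; simp only [if_pos hEpk]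
        exact hAclosed.csSup_mem ⟨s₁, hA0⟩ hAbdd
      refine ⟨humem.1, humem.2, fun s hs1 hs2 => ?_⟩
      by_contra hc
      push_neg at hc
      have hsA : s ∈ A := ⟨⟨le_trans humem.1.1 hs1.le, hs2⟩, hc⟩
      have : s ≤ u k := by
        rw [hudef]; simp only [if_pos hEpk]
        exact le_csSup hAbdd hsA
      linarith
    have hvspec : ∀ k : ℕ, Ep k → v k ∈ Set.Icc (u k) (σ k) ∧
        1/2 ≤ hN r (w k (v k)) ∧ u k < v k ∧
        ∀ s, u k ≤ s → s < v k → hN r (w k s) < 1/2 := by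
      intro k hEpk
      obtain ⟨humem, huval, hugt⟩ := huspec k hEpk
      set B : Set ℝ := {s : ℝ | s ∈ Set.Icc (u k) (σ k) ∧ 1/2 ≤ hN r (w k s)}
        with hBdef
      have hB0 : σ k ∈ B := ⟨⟨humem.2, le_rfl⟩, (hNwσ k).ge⟩
      have hBbdd : BddBelow B := ⟨u k, fun t htB => htB.1.1⟩
      have hu0' : (0:ℝ) ≤ u k := le_trans hs₁0 humem.1
      have hBclosed : IsClosed B := by
        have hBeq : B = Set.Icc (u k) (σ k) ∩
            (fun s => hN r (w k s)) ⁻¹' (Set.Ici (1/2)) := by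
          ext t; simp only [hBdef, Set.mem_setOf_eq, Set.mem_inter_iff,
            Set.mem_preimage, Set.mem_Ici]
        rw [hBeq]
        exact ((hNwkcont k).mono
          (fun t ht' => le_trans hu0' ht'.1)).preimage_isClosed_of_isClosed
          isClosed_Icc isClosed_Ici
      have hvmem : v k ∈ B := by
        rw [hvdef]; simp only [if_pos hEpk]
        exact hBclosed.csInf_mem ⟨σ k, hB0⟩ hBbdd
      have hulv : u k < v k := by
        rcases eq_or_lt_of_le hvmem.1.1 with heq | hlt
        · exfalso
          have h2 := hvmem.2
          rw [← heq] at h2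
          linarith [huval, hηhalf]
        · exact hlt
      refine ⟨hvmem.1, hvmem.2, hulv, fun s hsu hsv => ?_⟩
      by_contra hc
      push_neg at hc
      have hsB : s ∈ B := ⟨⟨hsu, le_trans hsv.le hvmem.1.2⟩, hc⟩
      have : v k ≤ s := by
        rw [hvdef]; simp only [if_pos hEpk]
        exact csInf_le hBbdd hsB
      linarith
    have hu0 : ∀ k, 0 ≤ u k := by
      intro k
      by_cases hEpk : Ep k
      · exact le_trans hs₁0 (huspec k hEpk).1.1
      · rw [hudef]; simp only [if_neg hEpk]; exact le_rfl
    -- the shifted family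
    set wt : ℕ → ℝ → (Fin m → ℝ) := fun k s => w k (u k + s) with hwtdef
    set Dt : ℕ → ℝ → (Fin m → ℝ) := fun k s => D k (u k + s) with hDtdef
    have hodet : ∀ k (s : ℝ), 0 ≤ s → HasDerivAt (wt k) (Dt k s) s := by
      intro k s hs
      have h1 := hode k (u k + s) (by linarith [hu0 k])
      have hinner : HasDerivAt (fun z : ℝ => u k + z) 1 s := by
        simpa using (hasDerivAt_id s).const_add (u k)
      have h2 := h1.scomp s hinner
      rw [one_smul] at h2; exact h2
    have hDtcont : ∀ k, ContinuousOn (Dt k) (Set.Ici 0) := by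
      intro k
      have h1 : ContinuousOn (D k ∘ fun s : ℝ => u k + s) (Set.Ici 0) := by
        refine (hDcont k).comp (continuous_const.add continuous_id).continuousOn ?_
        intro s hs
        simp only [Set.mem_Ici] at *
        linarith [hu0 k]
      exact h1
    have hwtnorm : ∀ k (s : ℝ), 0 ≤ s → ‖wt k s‖ ≤ 1 :=
      fun k s hs => hwnorm k _ (by linarith [hu0 k])
    have hsmallt : ∀ ε : ℝ, 0 < ε → ∀ᶠ k in (U:Filter ℕ),
        ∀ s : ℝ, 0 ≤ s → ‖Dt k s - fH (wt k s)‖ ≤ ε := by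
      intro ε hε
      filter_upwards [hmono (hsmall ε hε)] with k hk s hs
      exact hk (u k + s) (by linarith [hu0 k])
    obtain ⟨Y₂, hY₂sol, hY₂lim, hY₂bdd, C₂, hC₂pos, hC₂equi, hC₂lip⟩ :=
      limitSolution fH hfH_cont U wt Dt (Eventually.of_forall hodet)
        (Eventually.of_forall hDtcont) (Eventually.of_forall hwtnorm) hsmallt
    have hY₂0 : hN r (Y₂ 0) ≤ η := by
      have hlim := ((hN_continuous r hr).tendsto (Y₂ 0)).comp (hY₂lim 0 le_rfl)
      refine le_of_tendsto hlim ?_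
      filter_upwards [hEp] with k hk
      have h0 : wt k 0 = w k (u k) := by simp [hwtdef]
      simp only [Function.comp_apply, h0]
      exact (huspec k hk).2.1
    have hY₂stab : ∀ t : ℝ, 0 ≤ t → hN r (Y₂ t) < 1/2 := by
      have hn := hδp Y₂ hY₂sol (hηδ _ hY₂0)
      intro t ht
      exact hεsp _ (hn t ht).le
    have hY₂tend : Tendsto Y₂ atTop (𝓝 0) :=
      allSolTendsto r hr lr fH hfH_hom hfH_attr Y₂ hY₂sol
    set d : ℕ → ℝ := fun k => v k - u k with hddef
    have hd0 : ∀ᶠ k in (U:Filter ℕ), 0 ≤ d k := by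
      filter_upwards [hEp] with k hk
      have := (hvspec k hk).2.2.1
      simp only [hddef]
      linarith
    by_cases hbd : ∃ B : ℝ, 0 ≤ B ∧ ∀ᶠ k in (U : Filter ℕ), d k ≤ B
    · obtain ⟨B, hB0, hBev⟩ := hbd
      obtain ⟨sstar, hsstarmem, hsstarlim⟩ : ∃ a ∈ Set.Icc (0:ℝ) B,
          Tendsto d (U:Filter ℕ) (𝓝 a) := by
        obtain ⟨a, ha, hle⟩ := (isCompact_Icc (a := (0:ℝ)) (b := B)).ultrafilter_le_nhds
          (U.map d) (by
            rw [Ultrafilter.coe_map, Filter.le_principal_iff, Filter.mem_map]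
            filter_upwards [hd0, hBev] with k h1 h2
            exact ⟨h1, h2⟩)
        exact ⟨a, ha, by rwa [Ultrafilter.coe_map] at hle⟩
      have hwv : Tendsto (fun k => w k (v k)) (U:Filter ℕ) (𝓝 (Y₂ sstar)) := by
        rw [Metric.tendsto_nhds]
        intro ε hε
        have hd2 : ∀ᶠ k in (U:Filter ℕ), |d k - sstar| < ε/(2*(C₂+1)) := by
          have h := Metric.tendsto_nhds.1 hsstarlim (ε/(2*(C₂+1))) (by positivity)
          filter_upwards [h] with k hk
          rwa [Real.dist_eq] at hk
        have hd3 : ∀ᶠ k in (U:Filter ℕ),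
            dist (wt k sstar) (Y₂ sstar) < ε/2 :=
          Metric.tendsto_nhds.1 (hY₂lim sstar hsstarmem.1) (ε/2) (by positivity)
        filter_upwards [hd2, hd3, hC₂equi, hEp, hd0] with k h2 h3 h4 h5 h6
        have hwt_eq : w k (v k) = wt k (d k) := by
          simp only [hwtdef, hddef]
          congr 1
          ring
        rw [hwt_eq]
        have e1 : dist (wt k (d k)) (wt k sstar) ≤ C₂ * |d k - sstar| := by
          rw [dist_eq_norm]
          exact h4 (d k) sstar h6 hsstarmem.1
        have e3 : C₂ * |d k - sstar| < ε/2 := by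
          have h8 := mul_lt_mul_of_pos_left h2 hC₂pos
          have h7 : C₂ * (ε/(2*(C₂+1))) ≤ ε/2 := by
            rw [mul_comm, div_mul_eq_mul_div,
              div_le_div_iff₀ (by positivity) (by norm_num : (0:ℝ) < 2)]
            nlinarith
          exact h8.trans_le h7
        calc dist (wt k (d k)) (Y₂ sstar)
            ≤ dist (wt k (d k)) (wt k sstar) + dist (wt k sstar) (Y₂ sstar) :=
              dist_triangle _ _ _
        _ < ε/2 + ε/2 := add_lt_add (e1.trans_lt e3) h3
        _ = ε := by ring
      have hge : 1/2 ≤ hN r (Y₂ sstar) := by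
        have hlim := ((hN_continuous r hr).tendsto (Y₂ sstar)).comp hwv
        refine ge_of_tendsto hlim ?_
        filter_upwards [hEp] with k hk
        exact (hvspec k hk).2.1
      exact absurd (hY₂stab sstar hsstarmem.1) (not_lt.2 hge)
    · push_neg at hbd
      have hdub : ∀ B : ℝ, ∀ᶠ k in (U:Filter ℕ), B < d k := by
        intro B
        have h1 : ¬ ∀ᶠ k in (U:Filter ℕ), d k ≤ max B 0 := fun h => by
          obtain ⟨k, hk1, hk2⟩ := ((hbd _ (le_max_right B 0)).and h).exists; linarith
        have h2 := Ultrafilter.eventually_not.2 h1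
        filter_upwards [h2] with k hk
        push_neg at hk
        exact lt_of_le_of_lt (le_max_left _ _) hk
      have hNY₂ : Tendsto (fun s => hN r (Y₂ s)) atTop (𝓝 0) := by
        have := ((hN_continuous r hr).tendsto 0).comp hY₂tend
        rwa [hN_zero r hr] at this
      obtain ⟨s₂', hs₂'⟩ := eventually_atTop.1 (hNY₂.eventually (Iio_mem_nhds hη0))
      set s₂ : ℝ := max s₂' 1 with hs₂def
      have hs₂pos : (0:ℝ) < s₂ := lt_of_lt_of_le one_pos (le_max_right _ _)
      have hY₂s₂ : hN r (Y₂ s₂) < η := hs₂' s₂ (le_max_left _ _)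
      have hcontra : ∀ᶠ k in (U:Filter ℕ), η < hN r (wt k s₂) := by
        filter_upwards [hdub s₂, hEp] with k h1 h2
        have h4 : u k + s₂ ≤ σ k := by
          have h5 := (hvspec k h2).1.2
          simp only [hddef] at h1
          linarith
        have h3 := (huspec k h2).2.2 (u k + s₂) (by linarith) h4
        have h6 : wt k s₂ = w k (u k + s₂) := by simp [hwtdef]
        rwa [h6]
      have hge : η ≤ hN r (Y₂ s₂) := by
        have hlim := ((hN_continuous r hr).tendsto (Y₂ s₂)).comp
          (hY₂lim s₂ hs₂pos.le)
        refine ge_of_tendsto hlim ?_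
        filter_upwards [hcontra] with k hk
        exact hk.le
      linarith
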